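/- Let u_i = (cos θ_i, sin θ_i) for i = 1, 2, 3 be unit vectors in R^2 with the angles satisfying θ_i - θ_j ≢ 0 (mod π) for i ≠ j (i.e. the three directions are distinct). Define c_1 = cos(θ_2 - θ_3)/(sin(θ_2 - θ_1) sin(θ_3 - θ_1)), c_2 = cos(θ_3 - θ_1)/(sin(θ_3 - θ_2) sin(θ_1 - θ_2)), c_3 = cos(θ_1 - θ_2)/(sin(θ_1 - θ_3) sin(θ_2 - θ_3)). Then c_1 (u_1 ⊗ u_1) + c_2 (u_2 ⊗ u_2) + c_3 (u_3 ⊗ u_3) = Id on R^2, where u ⊗ u denotes the rank-one operator v ↦ (v·u) u. -/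

import Mathlib

open Real

/-- A rank-one operator `u ⊗ u` on `ℝ²` applied to `v`: `(v·u) • u`. -/
noncomputable def tensorSq (u v : ℝ × ℝ) : ℝ × ℝ := (v.1 * u.1 + v.2 * u.2) • u

theorem stmt0 (θ₁ θ₂ θ₃ : ℝ)
    (h12 : Real.sin (θ₁ - θ₂) ≠ 0) (h13 : Real.sin (θ₁ - θ₃) ≠ 0)
    (h23 : Real.sin (θ₂ - θ₃) ≠ 0)
    (u : Fin 3 → ℝ × ℝ)
    (hu1 : u 0 = (Real.cos θ₁, Real.sin θ₁))
    (hu2 : u 1 = (Real.cos θ₂, Real.sin θ₂))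
    (hu3 : u 2 = (Real.cos θ₃, Real.sin θ₃))
    (c₁ c₂ c₃ : ℝ)
    (hc1 : c₁ = Real.cos (θ₂ - θ₃) / (Real.sin (θ₂ - θ₁) * Real.sin (θ₃ - θ₁)))
    (hc2 : c₂ = Real.cos (θ₃ - θ₁) / (Real.sin (θ₃ - θ₂) * Real.sin (θ₁ - θ₂)))
    (hc3 : c₃ = Real.cos (θ₁ - θ₂) / (Real.sin (θ₁ - θ₃) * Real.sin (θ₂ - θ₃))) :
    ∀ v : ℝ × ℝ,
      c₁ • tensorSq (u 0) v + c₂ • tensorSq (u 1) v + c₃ • tensorSq (u 2) v = v := by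
  intro v
  rw [hu1, hu2, hu3]; subst hc1 hc2 hc3
  simp only [Real.sin_sub, Real.cos_sub] at *
  have p1 := sin_sq_add_cos_sq θ₁
  have p2 := sin_sq_add_cos_sq θ₂
  have p3 := sin_sq_add_cos_sq θ₃
  set s1 := Real.sin θ₁; set c1 := Real.cos θ₁
  set s2 := Real.sin θ₂; set c2 := Real.cos θ₂
  set s3 := Real.sin θ₃; set c3 := Real.cos θ₃
  simp only [tensorSq, Prod.ext_iff, Prod.smul_fst, Prod.smul_snd, Prod.fst_add, Prod.snd_add,
    smul_eq_mul]
  have h21 : s2 * c1 - c2 * s1 ≠ 0 := fun h => h12 (by linarith)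
  have h31 : s3 * c1 - c3 * s1 ≠ 0 := fun h => h13 (by linarith)
  have h32 : s3 * c2 - c3 * s2 ≠ 0 := fun h => h23 (by linarith)
  have h23' : c2 * s3 - c3 * s2 ≠ 0 := fun h => h23 (by linarith)
  have h12' : c2 * s1 - s2 * c1 ≠ 0 := fun h => h12 (by linarith)
  have h13' : c3 * s1 - s3 * c1 ≠ 0 := fun h => h13 (by linarith)
  have h32' : c3 * s2 - c2 * s3 ≠ 0 := fun h => h23 (by linarith)
  constructor <;> field_simp <;> ring_nf
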